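/- (Contraction at zero disorder: μ_0 ≤ 1.) Let m, n be nonnegative integers, M = m+n+1, and λ ∈ ℂ with Im λ ≥ 0. Suppose z_λ ∈ ℍ satisfies the fixed-point equation z_λ = φ(z_λ, z_λ, 0,…,0, λ). Then for all z_1, z_2 ∈ ℍ: w(φ(z_1, z_2, 0,…,0, λ)) + w(φ(z_2, z_1, 0,…,0, λ)) ≤ w(z_1) + w(z_2), where w = w_{z_λ} is the weight based at z_λ. -/

import Mathlib

noncomputable section

/-- The iterated map `φ_j(z, q_1,…,q_j, λ)`: `φ_0 = z`,
`φ_j = −1/(φ_{j−1} + λ − q_j + 1)`, where `q_j` is `q (j-1)`. -/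
def phiIter (lam : ℂ) (q : ℕ → ℝ) : ℕ → ℂ → ℂ
  | 0, z => z
  | (j+1), z => -1 / (phiIter lam q j z + lam - (q j : ℂ) + 1)

/-- `φ(z₁, z₂, q_1,…,q_M, λ)` with `M = m+n+1`:
`z₁` passes through the `n`-chain with `q_1,…,q_n`, `z₂` through the `m`-chain with
`q_{n+1},…,q_{n+m}`, and `q_M = q (n+m)`. -/
def phiMap (m n : ℕ) (lam : ℂ) (q : ℕ → ℝ) (z₁ z₂ : ℂ) : ℂ :=
  -1 / (phiIter lam q n z₁ + phiIter lam (fun i => q (n + i)) m z₂ + lam - (q (n + m) : ℂ))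

/-- The weight based at `s`: `w_s(z) = |z−s|²/(Im z · Im s)`. -/
def wt (s z : ℂ) : ℝ := ‖z - s‖ ^ 2 / (z.im * s.im)

private lemma im_pos_ne_zero {P : ℂ} (hP : 0 < P.im) : P ≠ 0 := by
  intro h; rw [h] at hP; simp at hP

private lemma neg_inv_im {P : ℂ} : (-1/P).im = P.im / Complex.normSq P := by
  rw [div_eq_mul_inv, neg_one_mul, Complex.neg_im, Complex.inv_im]
  ring

private lemma neg_inv_im_pos {P : ℂ} (hP : 0 < P.im) : 0 < (-1/P).im := by
  rw [neg_inv_im]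
  exact div_pos hP (Complex.normSq_pos.2 (im_pos_ne_zero hP))

private lemma wt_neg_inv {P Q : ℂ} (hP : 0 < P.im) (hQ : 0 < Q.im) :
    wt (-1/Q) (-1/P) = ‖P - Q‖ ^ 2 / (P.im * Q.im) := by
  have hP0 := im_pos_ne_zero hP
  have hQ0 := im_pos_ne_zero hQ
  have hnP : Complex.normSq P ≠ 0 := (Complex.normSq_pos.2 hP0).ne'
  have hnQ : Complex.normSq Q ≠ 0 := (Complex.normSq_pos.2 hQ0).ne'
  have h1 : -1/P - -1/Q = (P - Q) * (P⁻¹ * Q⁻¹) := by field_simp; ring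
  unfold wt
  rw [h1, neg_inv_im, neg_inv_im, norm_mul, norm_mul, norm_inv, norm_inv]
  simp only [mul_pow, inv_pow, Complex.sq_norm]
  field_simp

private lemma wt_step {c z s : ℂ} (hc : 0 ≤ c.im) (hz : 0 < z.im) (hs : 0 < s.im) :
    wt (-1/(s+c)) (-1/(z+c)) ≤ wt s z := by
  have hP : 0 < (z+c).im := by rw [Complex.add_im]; linarith
  have hQ : 0 < (s+c).im := by rw [Complex.add_im]; linarith
  rw [wt_neg_inv hP hQ, show (z+c) - (s+c) = z - s by ring]
  unfold wt
  gcongr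
  · rw [Complex.add_im]; linarith
  · rw [Complex.add_im]; linarith

private lemma cs {p q : ℂ} {x y : ℝ} (hx : 0 < x) (hy : 0 < y) :
    ‖p + q‖ ^ 2 / (x + y) ≤ ‖p‖ ^ 2 / x + ‖q‖ ^ 2 / y := by
  rw [div_add_div _ _ hx.ne' hy.ne', div_le_div_iff₀ (by positivity) (by positivity)]
  simp only [Complex.sq_norm, Complex.normSq_apply, Complex.add_re, Complex.add_im]
  nlinarith [sq_nonneg (y * p.re - x * q.re), sq_nonneg (y * p.im - x * q.im), mul_pos hx hy]

private lemma key {c : ℂ} (hc : 0 ≤ c.im) {a b u v : ℂ}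
    (ha : 0 < a.im) (hb : 0 < b.im) (hu : 0 < u.im) (hv : 0 < v.im) :
    wt (-1/(a+b+c)) (-1/(u+v+c)) ≤ (a.im * wt a u + b.im * wt b v) / (a.im + b.im) := by
  have hP : 0 < (u+v+c).im := by simp only [Complex.add_im]; linarith
  have hQ : 0 < (a+b+c).im := by simp only [Complex.add_im]; linarith
  rw [wt_neg_inv hP hQ]
  have h1 : ‖(u+v+c) - (a+b+c)‖ ^ 2 / ((u+v+c).im * (a+b+c).im)
      ≤ ‖(u-a) + (v-b)‖ ^ 2 / ((u.im + v.im) * (a.im + b.im)) := by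
    rw [show (u+v+c) - (a+b+c) = (u-a) + (v-b) by ring]
    gcongr
    · simp only [Complex.add_im]; linarith
    · simp only [Complex.add_im]; linarith
  refine h1.trans ?_
  rw [← div_div]
  rw [show a.im * wt a u + b.im * wt b v
      = ‖u - a‖ ^ 2 / u.im + ‖v - b‖ ^ 2 / v.im by
    unfold wt; field_simp]
  gcongr
  exact cs hu hv

private lemma phiIter_succ (lam : ℂ) (j : ℕ) (w : ℂ) :
    phiIter lam (fun _ => 0) (j+1) w = -1/(phiIter lam (fun _ => 0) j w + (lam + 1)) := by
  show -1 / (phiIter lam (fun _ => 0) j w + lam - ((0:ℝ):ℂ) + 1) = _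
  norm_num
  ring_nf

private lemma chain {lam : ℂ} (hlam : 0 ≤ lam.im) (j : ℕ) :
    ∀ {z s : ℂ}, 0 < z.im → 0 < s.im →
      0 < (phiIter lam (fun _ => 0) j z).im ∧
      wt (phiIter lam (fun _ => 0) j s) (phiIter lam (fun _ => 0) j z) ≤ wt s z := by
  induction j with
  | zero => exact fun hz hs => ⟨hz, le_refl _⟩
  | succ j ih =>
    intro z s hz hs
    obtain ⟨hz', hw⟩ := ih hz hs
    obtain ⟨hs', -⟩ := ih hs hs
    have hc : 0 ≤ (lam + 1).im := by
      rw [Complex.add_im, Complex.one_im]; linarith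
    rw [phiIter_succ, phiIter_succ]
    constructor
    · apply neg_inv_im_pos
      rw [Complex.add_im]; linarith
    · exact (wt_step hc hz' hs').trans hw

private lemma phiMap_eq (m n : ℕ) (lam : ℂ) (w₁ w₂ : ℂ) :
    phiMap m n lam (fun _ => 0) w₁ w₂
      = -1/(phiIter lam (fun _ => 0) n w₁ + phiIter lam (fun _ => 0) m w₂ + lam) := by
  unfold phiMap
  norm_num

/-- **contraction at zero disorder: `μ₀ ≤ 1`.** Let `M = m+n+1`,
`Im λ ≥ 0`, and suppose `z_λ ∈ ℍ` satisfies `z_λ = φ(z_λ, z_λ, 0,…,0, λ)`.  Then for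
all `z₁, z₂ ∈ ℍ`:
`w(φ(z₁,z₂,0,…,0,λ)) + w(φ(z₂,z₁,0,…,0,λ)) ≤ w(z₁) + w(z₂)`,
where `w = w_{z_λ}` is the weight based at `z_λ`. -/
theorem statement17 (m n : ℕ) (lam : ℂ) (hlam : 0 ≤ lam.im)
    (zlam : ℂ) (hzlam : 0 < zlam.im)
    (hfix : zlam = phiMap m n lam (fun _ => 0) zlam zlam)
    (z₁ z₂ : ℂ) (hz₁ : 0 < z₁.im) (hz₂ : 0 < z₂.im) :
    wt zlam (phiMap m n lam (fun _ => 0) z₁ z₂) +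
      wt zlam (phiMap m n lam (fun _ => 0) z₂ z₁) ≤
      wt zlam z₁ + wt zlam z₂ := by
  set a := phiIter lam (fun _ => 0) n zlam with hadef
  set b := phiIter lam (fun _ => 0) m zlam with hbdef
  set u := phiIter lam (fun _ => 0) n z₁ with hudef
  set v := phiIter lam (fun _ => 0) m z₂ with hvdef
  set u' := phiIter lam (fun _ => 0) n z₂ with hu'def
  set v' := phiIter lam (fun _ => 0) m z₁ with hv'def
  have ha : 0 < a.im := (chain hlam n hzlam hzlam).1
  have hb : 0 < b.im := (chain hlam m hzlam hzlam).1
  have hu : 0 < u.im := (chain hlam n hz₁ hzlam).1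
  have hv : 0 < v.im := (chain hlam m hz₂ hzlam).1
  have hu' : 0 < u'.im := (chain hlam n hz₂ hzlam).1
  have hv' : 0 < v'.im := (chain hlam m hz₁ hzlam).1
  have wau : wt a u ≤ wt zlam z₁ := (chain hlam n hz₁ hzlam).2
  have wbv : wt b v ≤ wt zlam z₂ := (chain hlam m hz₂ hzlam).2
  have wau' : wt a u' ≤ wt zlam z₂ := (chain hlam n hz₂ hzlam).2
  have wbv' : wt b v' ≤ wt zlam z₁ := (chain hlam m hz₁ hzlam).2
  have hfix' : zlam = -1/(a + b + lam) := by rw [hfix, phiMap_eq]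
  have k1 : wt zlam (phiMap m n lam (fun _ => 0) z₁ z₂)
      ≤ (a.im * wt a u + b.im * wt b v) / (a.im + b.im) := by
    rw [phiMap_eq]
    rw [hfix']
    exact key hlam ha hb hu hv
  have k2 : wt zlam (phiMap m n lam (fun _ => 0) z₂ z₁)
      ≤ (a.im * wt a u' + b.im * wt b v') / (a.im + b.im) := by
    rw [phiMap_eq]
    rw [hfix']
    exact key hlam ha hb hu' hv'
  have hsum : (a.im * wt a u + b.im * wt b v) / (a.im + b.im)
      + (a.im * wt a u' + b.im * wt b v') / (a.im + b.im)
      ≤ wt zlam z₁ + wt zlam z₂ := by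
    have hab : 0 < a.im + b.im := by linarith
    rw [← add_div, div_le_iff₀ hab]
    nlinarith [mul_le_mul_of_nonneg_left wau ha.le, mul_le_mul_of_nonneg_left wbv hb.le,
      mul_le_mul_of_nonneg_left wau' ha.le, mul_le_mul_of_nonneg_left wbv' hb.le]
  linarith [k1, k2, hsum]

end
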